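/- Let D : A → A be the ℂ-linear operator on A = MvPolynomial (Fin (2n)) (Polynomial ℂ) given by D f = 2ℏ · (∂f/∂ℏ) + ∑_{i ∈ Fin(2n)} y_i · (∂f/∂y_i), where ∂/∂ℏ differentiates the ℂ[ℏ]-coefficients. Then D is a derivation of the Moyal product: D(f ⋆ g) = (D f) ⋆ g + f ⋆ (D g) for all f, g ∈ A. Equivalently, the Moyal product is graded for the weight assignment wt(y_i) = 1, wt(ℏ) = 2: the Moyal product of weight-homogeneous elements of weights a and b is weight-homogeneous of weight a + b. (Infinitesimally this is the identity ℏ∂_ℏ m_ℏ + [𝔼, m_ℏ] = 0 for the Euler vector field, used in the Gauss–Manin argument.) -/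

import Mathlib

set_option maxHeartbeats 1000000


noncomputable section

/-- The polynomial Weyl algebra carrier: polynomials in `y₀, …, y_{2n−1}` with
coefficients in `ℂ[ℏ]` (where `ℏ = Polynomial.X`). -/
abbrev WeylPoly (n : ℕ) := MvPolynomial (Fin (2*n)) (Polynomial ℂ)

/-- The standard symplectic matrix `ω̂`: `ω̂(i,j) = 1` if `j = i + n`, `−1` if
`i = j + n`, and `0` otherwise. -/
def omegaHat (n : ℕ) (i j : Fin (2*n)) : ℂ :=
  if (j : ℕ) = (i : ℕ) + n then 1 else if (i : ℕ) = (j : ℕ) + n then -1 else 0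

/-- Iterated partial derivative `∂_{v 0} ⋯ ∂_{v (m−1)}`. -/
def multiDeriv {n m : ℕ} (v : Fin m → Fin (2*n)) (f : WeylPoly n) : WeylPoly n :=
  (List.ofFn v).foldr (fun i g => MvPolynomial.pderiv i g) f

/-- The Moyal product
`f ⋆ g = ∑_{m} (ℏ^m / (2^m m!)) ∑_{i₁,…,i_m} ∑_{j₁,…,j_m} (∏_s ω̂(i_s, j_s)) ·
(∂_{i₁} ⋯ ∂_{i_m} f) · (∂_{j₁} ⋯ ∂_{j_m} g)`; the sum over `m` is truncated at
`totalDegree f`, beyond which all terms vanish. -/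
def moyal (n : ℕ) (f g : WeylPoly n) : WeylPoly n :=
  ∑ m ∈ Finset.range (f.totalDegree + 1),
    MvPolynomial.C (Polynomial.C (1 / ((2:ℂ)^m * (Nat.factorial m : ℂ))) * Polynomial.X ^ m) *
      ∑ v : Fin m → Fin (2*n), ∑ w : Fin m → Fin (2*n),
        MvPolynomial.C (Polynomial.C (∏ s : Fin m, omegaHat n (v s) (w s))) *
          (multiDeriv v f * multiDeriv w g)

/-- Coefficientwise derivative in `ℏ`: apply `Polynomial.derivative` to each
`ℂ[ℏ]`-coefficient of a polynomial in the `y`-variables. -/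
def hbarDeriv (n : ℕ) (f : WeylPoly n) : WeylPoly n :=
  AddMonoidAlgebra.ofCoeff
    (Finsupp.mapRange (fun p => Polynomial.derivative p) (by simp) (AddMonoidAlgebra.coeff f))

/-- The Euler operator `D f = 2ℏ ∂f/∂ℏ + ∑_i y_i ∂f/∂y_i`. -/
def eulerOp (n : ℕ) (f : WeylPoly n) : WeylPoly n :=
  2 • (MvPolynomial.C Polynomial.X * hbarDeriv n f)
    + ∑ i : Fin (2*n), MvPolynomial.X i * MvPolynomial.pderiv i f

section Aux

open MvPolynomial

variable {n : ℕ}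

/-- degree drop of pderiv -/
theorem td_pderiv_le {σ R : Type*} [CommRing R] (i : σ) (f : MvPolynomial σ R) :
    (pderiv i f).totalDegree ≤ f.totalDegree - 1 := by
  classical
  conv_lhs => rw [f.as_sum, map_sum]
  refine totalDegree_finsetSum_le fun s hs => ?_
  rw [pderiv_monomial]
  rcases Nat.eq_zero_or_pos (s i) with h | h
  · simp [h]
  · refine (totalDegree_monomial_le _ _).trans ?_
    have hle : Finsupp.single i 1 ≤ s := by rwa [Finsupp.single_le_iff]
    have heq : s = (s - Finsupp.single i 1) + Finsupp.single i 1 := by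
      rw [tsub_add_cancel_of_le hle]
    have hsum : (s.sum fun _ => id) = ((s - Finsupp.single i 1).sum fun _ => id) + 1 := by
      conv_lhs => rw [heq]
      rw [Finsupp.sum_add_index (by simp) (by intros; rfl)]
      simp
    have h2 : (s.sum fun _ => id) ≤ f.totalDegree := le_totalDegree hs
    omega

theorem pderiv_eq_zero_of_td_eq_zero {σ R : Type*} [CommRing R] (i : σ) (f : MvPolynomial σ R)
    (h : f.totalDegree = 0) : pderiv i f = 0 := by
  classical
  rw [f.as_sum, map_sum]
  refine Finset.sum_eq_zero fun s hs => ?_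
  rw [pderiv_monomial, (totalDegree_eq_zero_iff σ f).mp h s hs i]
  simp

theorem hbarDeriv_add (f g : WeylPoly n) :
    hbarDeriv n (f + g) = hbarDeriv n f + hbarDeriv n g :=
  congrArg AddMonoidAlgebra.ofCoeff (Finsupp.mapRange_add (by simp) _ _)

theorem hbarDeriv_zero : hbarDeriv n 0 = 0 :=
  congrArg AddMonoidAlgebra.ofCoeff Finsupp.mapRange_zero

theorem hbarDeriv_monomial (s : Fin (2*n) →₀ ℕ) (a : Polynomial ℂ) :
    hbarDeriv n (monomial s a) = monomial s (Polynomial.derivative a) := by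
  simp only [hbarDeriv]
  exact congrArg AddMonoidAlgebra.ofCoeff Finsupp.mapRange_single

theorem hbarDeriv_mul (f g : WeylPoly n) :
    hbarDeriv n (f * g) = hbarDeriv n f * g + f * hbarDeriv n g := by
  induction f using MvPolynomial.induction_on' with
  | add p q hp hq =>
    rw [add_mul, hbarDeriv_add, hp, hq, hbarDeriv_add]; ring
  | monomial s a =>
    induction g using MvPolynomial.induction_on' with
    | add p q hp hq =>
      rw [mul_add, hbarDeriv_add, hp, hq, hbarDeriv_add]; ring
    | monomial t b =>
      rw [monomial_mul, hbarDeriv_monomial, hbarDeriv_monomial, hbarDeriv_monomial,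
        Polynomial.derivative_mul, map_add, monomial_mul, monomial_mul]


theorem pderiv_hbarDeriv (i : Fin (2*n)) (f : WeylPoly n) :
    pderiv i (hbarDeriv n f) = hbarDeriv n (pderiv i f) := by
  induction f using MvPolynomial.induction_on' with
  | add p q hp hq => rw [hbarDeriv_add, map_add, map_add, hbarDeriv_add, hp, hq]
  | monomial s a =>
    rw [hbarDeriv_monomial, pderiv_monomial, pderiv_monomial, hbarDeriv_monomial]
    congr 1
    rw [Polynomial.derivative_mul]
    simp

theorem pderiv_pderiv_comm (i j : Fin (2*n)) (f : WeylPoly n) :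
    pderiv i (pderiv j f) = pderiv j (pderiv i f) := by
  induction f using MvPolynomial.induction_on' with
  | add p q hp hq => simp [map_add, hp, hq]
  | monomial s a =>
    classical
    rcases eq_or_ne i j with rfl | hij
    · rfl
    · simp only [pderiv_monomial]
      rw [tsub_right_comm (b := Finsupp.single j 1)]
      congr 1
      have h1 : ((s - Finsupp.single j 1 : Fin (2*n) →₀ ℕ)) i = s i := by
        rw [Finsupp.tsub_apply, Finsupp.single_eq_of_ne hij, tsub_zero]
      have h2 : ((s - Finsupp.single i 1 : Fin (2*n) →₀ ℕ)) j = s j := by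
        rw [Finsupp.tsub_apply, Finsupp.single_eq_of_ne (Ne.symm hij), tsub_zero]
      rw [h1, h2]; ring


theorem eulerOp_add (f g : WeylPoly n) :
    eulerOp n (f + g) = eulerOp n f + eulerOp n g := by
  simp only [eulerOp, hbarDeriv_add, map_add, mul_add, smul_add, Finset.sum_add_distrib]
  ring

theorem eulerOp_zero : eulerOp n 0 = 0 := by
  simp [eulerOp, hbarDeriv_zero]

theorem eulerOp_sum {ι : Type*} (s : Finset ι) (F : ι → WeylPoly n) :
    eulerOp n (∑ i ∈ s, F i) = ∑ i ∈ s, eulerOp n (F i) := by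
  classical
  induction s using Finset.induction_on with
  | empty => simp [eulerOp_zero]
  | insert _ _ h ih => rw [Finset.sum_insert h, Finset.sum_insert h, eulerOp_add, ih]

theorem eulerOp_mul (f g : WeylPoly n) :
    eulerOp n (f * g) = eulerOp n f * g + f * eulerOp n g := by
  simp only [eulerOp, hbarDeriv_mul, pderiv_mul, two_smul]
  have h1 : ∀ i : Fin (2*n), X i * (pderiv i f * g + f * pderiv i g)
      = (X i * pderiv i f) * g + f * (X i * pderiv i g) := by intro i; ring
  simp only [h1, Finset.sum_add_distrib, mul_add, add_mul, Finset.sum_mul, Finset.mul_sum]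
  have h3 : f * (C Polynomial.X * hbarDeriv n g) = C Polynomial.X * (f * hbarDeriv n g) := by
    ring
  simp only [mul_assoc, h3]
  abel

theorem pderiv_eulerOp (i : Fin (2*n)) (f : WeylPoly n) :
    pderiv i (eulerOp n f) = eulerOp n (pderiv i f) + pderiv i f := by
  classical
  simp only [eulerOp, two_smul, map_add, map_sum, pderiv_mul, pderiv_C, pderiv_hbarDeriv]
  have h2 : ∀ j : Fin (2*n), pderiv i (X j) * pderiv j f + X j * pderiv i (pderiv j f)
      = pderiv i (X j) * pderiv j f + X j * pderiv j (pderiv i f) := by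
    intro j; rw [pderiv_pderiv_comm]
  simp only [zero_mul, zero_add, h2]
  rw [Finset.sum_add_distrib]
  have h3 : ∑ j : Fin (2*n), pderiv i (X j) * pderiv j f = pderiv i f := by
    rw [Finset.sum_eq_single i]
    · simp
    · intro j _ hj; rw [pderiv_X_of_ne hj]; simp
    · simp
  rw [h3]; ring


theorem hbarDeriv_C (p : Polynomial ℂ) :
    hbarDeriv n (C p) = C (Polynomial.derivative p) := by
  have := hbarDeriv_monomial (n := n) 0 p
  simpa using this

theorem eulerOp_C (p : Polynomial ℂ) :
    eulerOp n (C p) = C (2 * Polynomial.X * Polynomial.derivative p) := by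
  simp only [eulerOp, hbarDeriv_C, pderiv_C, mul_zero, Finset.sum_const_zero, add_zero,
    two_smul, map_mul, map_ofNat]
  ring

theorem eulerOp_C_mul (p : Polynomial ℂ) (h : WeylPoly n) :
    eulerOp n (C p * h)
      = C (2 * Polynomial.X * Polynomial.derivative p) * h + C p * eulerOp n h := by
  rw [eulerOp_mul, eulerOp_C]

theorem eulerOp_C_const_mul (x : ℂ) (h : WeylPoly n) :
    eulerOp n (C (Polynomial.C x) * h) = C (Polynomial.C x) * eulerOp n h := by
  rw [eulerOp_C_mul]; simp

/-- key commutation for iterated derivatives -/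
theorem foldr_pderiv_eulerOp (l : List (Fin (2*n))) (f : WeylPoly n) :
    l.foldr (fun i g => pderiv i g) (eulerOp n f)
      = eulerOp n (l.foldr (fun i g => pderiv i g) f)
        + l.length • l.foldr (fun i g => pderiv i g) f := by
  induction l with
  | nil => simp
  | cons i l ih =>
    simp only [List.foldr_cons, List.length_cons, ih, map_add, map_nsmul, pderiv_eulerOp]
    rw [succ_nsmul]
    abel

theorem multiDeriv_eulerOp {m : ℕ} (v : Fin m → Fin (2*n)) (f : WeylPoly n) :
    multiDeriv v (eulerOp n f) = eulerOp n (multiDeriv v f) + m • multiDeriv v f := by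
  have := foldr_pderiv_eulerOp (List.ofFn v) f
  simpa [multiDeriv] using this

theorem foldr_pderiv_totalDegree (l : List (Fin (2*n))) (f : WeylPoly n) :
    (l.foldr (fun i g => pderiv i g) f).totalDegree ≤ f.totalDegree - l.length := by
  induction l with
  | nil => simp
  | cons i l ih =>
    simp only [List.foldr_cons, List.length_cons]
    calc (pderiv i (l.foldr (fun i g => pderiv i g) f)).totalDegree
        ≤ (l.foldr (fun i g => pderiv i g) f).totalDegree - 1 := td_pderiv_le _ _
      _ ≤ (f.totalDegree - l.length) - 1 := by omega
      _ = f.totalDegree - (l.length + 1) := by omega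

theorem multiDeriv_eq_zero {m : ℕ} (v : Fin m → Fin (2*n)) (f : WeylPoly n)
    (h : f.totalDegree < m) : multiDeriv v f = 0 := by
  rcases m with - | k
  · omega
  · rw [multiDeriv, List.ofFn_succ, List.foldr_cons]
    have hdeg : ((List.ofFn fun i : Fin k => v i.succ).foldr
        (fun i g => pderiv i g) f).totalDegree = 0 := by
      have := foldr_pderiv_totalDegree (List.ofFn fun i : Fin k => v i.succ) f
      rw [List.length_ofFn] at this
      omega
    exact pderiv_eq_zero_of_td_eq_zero _ _ hdeg

theorem td_hbarDeriv_le (f : WeylPoly n) :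
    (hbarDeriv n f).totalDegree ≤ f.totalDegree := by
  exact Finset.sup_mono (Finsupp.support_mapRange (f := fun p => Polynomial.derivative p) (hf := by simp))

theorem td_eulerOp_le (f : WeylPoly n) :
    (eulerOp n f).totalDegree ≤ f.totalDegree := by
  refine (totalDegree_add _ _).trans (max_le ?_ ?_)
  · rw [two_smul]
    refine (totalDegree_add _ _).trans (max_le ?_ ?_) <;>
    · refine (totalDegree_mul _ _).trans ?_
      rw [totalDegree_C, zero_add]
      exact td_hbarDeriv_le f
  · refine totalDegree_finsetSum_le fun i _ => ?_
    rcases Nat.eq_zero_or_pos f.totalDegree with h | h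
    · rw [pderiv_eq_zero_of_td_eq_zero _ _ h]
      simp
    · refine (totalDegree_mul _ _).trans ?_
      have h1 := totalDegree_X (R := Polynomial ℂ) i
      have h2 := td_pderiv_le i f
      omega


/-- inner double sum of the Moyal product -/
def moyalS (n m : ℕ) (f g : WeylPoly n) : WeylPoly n :=
  ∑ v : Fin m → Fin (2*n), ∑ w : Fin m → Fin (2*n),
    MvPolynomial.C (Polynomial.C (∏ s : Fin m, omegaHat n (v s) (w s))) *
      (multiDeriv v f * multiDeriv w g)

/-- the scalar coefficient of the Moyal product -/
def moyalCoeff (m : ℕ) : Polynomial ℂ :=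
  Polynomial.C (1 / ((2:ℂ)^m * (Nat.factorial m : ℂ))) * Polynomial.X ^ m

theorem moyal_eq_sum (f g : WeylPoly n) (N : ℕ) (hN : f.totalDegree < N) :
    moyal n f g = ∑ m ∈ Finset.range N, C (moyalCoeff m) * moyalS n m f g := by
  rw [moyal]
  refine Finset.sum_subset (Finset.range_subset_range.mpr hN) fun m _ hm => ?_
  rw [Finset.mem_range, not_lt] at hm
  have h0 : (∑ v : Fin m → Fin (2*n), ∑ w : Fin m → Fin (2*n),
      C (Polynomial.C (∏ s : Fin m, omegaHat n (v s) (w s))) *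
        (multiDeriv v f * multiDeriv w g)) = 0 := by
    refine Finset.sum_eq_zero fun v _ => Finset.sum_eq_zero fun w _ => ?_
    rw [multiDeriv_eq_zero v f (by omega)]
    simp
  rw [h0, mul_zero]

theorem deriv_moyalCoeff (m : ℕ) :
    2 * Polynomial.X * Polynomial.derivative (moyalCoeff m) = (2 * m) • moyalCoeff m := by
  rcases m with - | k
  · simp [moyalCoeff]
  · simp only [moyalCoeff, Polynomial.derivative_C_mul, Polynomial.derivative_X_pow,
      nsmul_eq_mul]
    push_cast [map_add, Polynomial.C_1, Polynomial.C_eq_natCast]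
    ring

theorem eulerOp_moyalS (m : ℕ) (f g : WeylPoly n) :
    eulerOp n (moyalS n m f g)
      = moyalS n m (eulerOp n f) g + moyalS n m f (eulerOp n g)
        - (2 * m) • moyalS n m f g := by
  have key : ∀ v w : Fin m → Fin (2*n),
      C (Polynomial.C (∏ s : Fin m, omegaHat n (v s) (w s))) *
          (multiDeriv v (eulerOp n f) * multiDeriv w g)
        + C (Polynomial.C (∏ s : Fin m, omegaHat n (v s) (w s))) *
          (multiDeriv v f * multiDeriv w (eulerOp n g))
        - (2 * m) • (C (Polynomial.C (∏ s : Fin m, omegaHat n (v s) (w s))) *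
          (multiDeriv v f * multiDeriv w g))
      = eulerOp n (C (Polynomial.C (∏ s : Fin m, omegaHat n (v s) (w s))) *
          (multiDeriv v f * multiDeriv w g)) := by
    intro v w
    rw [eulerOp_C_const_mul, eulerOp_mul, multiDeriv_eulerOp, multiDeriv_eulerOp]
    simp only [add_mul, mul_add, smul_mul_assoc, mul_smul_comm, two_mul, add_smul, smul_add]
    abel
  rw [moyalS, eulerOp_sum]
  rw [Finset.sum_congr rfl fun v _ => eulerOp_sum _ _]
  rw [Finset.sum_congr rfl fun v _ => Finset.sum_congr rfl fun w _ => (key v w).symm]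
  simp only [Finset.sum_add_distrib, Finset.sum_sub_distrib, Finset.smul_sum]
  rfl

theorem eulerOp_moyal_term (m : ℕ) (f g : WeylPoly n) :
    eulerOp n (C (moyalCoeff m) * moyalS n m f g)
      = C (moyalCoeff m) * moyalS n m (eulerOp n f) g
        + C (moyalCoeff m) * moyalS n m f (eulerOp n g) := by
  rw [eulerOp_C_mul, deriv_moyalCoeff, eulerOp_moyalS]
  simp only [map_nsmul, smul_mul_assoc, mul_sub, mul_add, mul_smul_comm]
  abel

end Aux

/-- The Euler operator `D f = 2ℏ ∂_ℏ f + ∑_i y_i ∂_i f` is a derivation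
of the Moyal product: `D(f ⋆ g) = (D f) ⋆ g + f ⋆ (D g)`. Equivalently, the Moyal
product is graded for the weights `wt(y_i) = 1`, `wt(ℏ) = 2`; infinitesimally this is
the identity `ℏ∂_ℏ m_ℏ + [𝔼, m_ℏ] = 0` used in the Gauss–Manin argument. -/
theorem eulerOp_derivation_of_moyal (n : ℕ) (hn : 1 ≤ n) (f g : WeylPoly n) :
    eulerOp n (moyal n f g) = moyal n (eulerOp n f) g + moyal n f (eulerOp n g) := by
  rw [moyal_eq_sum f g (f.totalDegree + 1) (by omega),
    moyal_eq_sum (eulerOp n f) g (f.totalDegree + 1) (by have := td_eulerOp_le f; omega),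
    moyal_eq_sum f (eulerOp n g) (f.totalDegree + 1) (by omega),
    eulerOp_sum, ← Finset.sum_add_distrib]
  exact Finset.sum_congr rfl fun m _ => eulerOp_moyal_term m f g

end
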